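/- Let I ⊆ ℝ be a compact interval, ℋ a complex Hilbert space, and (H^ℏ)_{ℏ∈I} a family of bounded self-adjoint operators on ℋ such that for every ζ ∈ ℂ with nonzero imaginary part the map ℏ ↦ ‖(H^ℏ − ζ·1)^{−1}‖ is continuous on I. Then the family of spectra {sp(H^ℏ)}_{ℏ∈I} is both outer continuous and inner continuous. -/

import Mathlib

open Filter Topology Metric


section aux

variable {ℋ : Type*} [NormedAddCommGroup ℋ] [InnerProductSpace ℂ ℋ] [CompleteSpace ℋ]

lemma my_not_mem_spectrum {H : ℋ →L[ℂ] ℋ} (hsa : IsSelfAdjoint H)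
    {ζ : ℂ} (hζ : ζ.im ≠ 0) : ζ ∉ spectrum ℂ H := fun h => by
  have := hsa.mem_spectrum_eq_re h
  apply hζ
  rw [this, Complex.ofReal_im]

lemma my_spec_eq (H : ℋ →L[ℂ] ℋ) (hsa : IsSelfAdjoint H) :
    spectrum ℂ H = (fun t : ℝ => (t : ℂ)) '' {x : ℝ | (x : ℂ) ∈ spectrum ℂ H} := by
  ext z
  constructor
  · intro hz
    refine ⟨z.re, ?_, (hsa.mem_spectrum_eq_re hz).symm⟩
    show ((z.re : ℝ) : ℂ) ∈ spectrum ℂ H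
    rw [← hsa.mem_spectrum_eq_re hz]; exact hz
  · rintro ⟨t, ht, rfl⟩; exact ht

lemma my_resolvent_norm [Nontrivial ℋ] (H : ℋ →L[ℂ] ℋ) (hsa : IsSelfAdjoint H)
    {ζ : ℂ} (hζ : ζ.im ≠ 0) :
    ‖Ring.inverse (H - ζ • (1 : ℋ →L[ℂ] ℋ))‖ = (Metric.infDist ζ (spectrum ℂ H))⁻¹ := by
  haveI : Nontrivial (ℋ →L[ℂ] ℋ) := by
    obtain ⟨x, hx⟩ := exists_ne (0 : ℋ)
    exact ⟨1, 0, fun h => hx (by simpa using DFunLike.congr_fun h x)⟩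
  have hζ' : ζ ∉ spectrum ℂ H := my_not_mem_spectrum hsa hζ
  have hS : (spectrum ℂ H).Nonempty := spectrum.nonempty H
  have hSc : IsCompact (spectrum ℂ H) := spectrum.isCompact H
  have hne : ∀ z ∈ spectrum ℂ H, z - ζ ≠ 0 := fun z hz =>
    sub_ne_zero.mpr (fun h => hζ' (h ▸ hz))
  set f : ℂ → ℂ := fun z => (z - ζ)⁻¹ with hf
  have hcont : ContinuousOn f (spectrum ℂ H) :=
    ContinuousOn.inv₀ (by fun_prop) hne
  have hsn : IsStarNormal H := hsa.isStarNormal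
  have hgid : cfc (fun z : ℂ => z - ζ) H = H - ζ • 1 := by
    have h1 : cfc (fun z : ℂ => z - ζ) H
        = cfc (fun z : ℂ => z) H - cfc (fun _ : ℂ => ζ) H := cfc_sub ..
    rw [h1, cfc_id' ℂ H, cfc_const ζ H, Algebra.algebraMap_eq_smul_one]
  have hmul : cfc f H * (H - ζ • 1) = 1 := by
    rw [← hgid, ← cfc_mul f _ H hcont (by fun_prop), ← cfc_one (R := ℂ) H]
    exact cfc_congr fun z hz => inv_mul_cancel₀ (hne z hz)
  have hmul' : (H - ζ • 1) * cfc f H = 1 := by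
    rw [← hgid, ← cfc_mul _ f H (by fun_prop) hcont, ← cfc_one (R := ℂ) H]
    exact cfc_congr fun z hz => mul_inv_cancel₀ (hne z hz)
  set u : (ℋ →L[ℂ] ℋ)ˣ := ⟨H - ζ • 1, cfc f H, hmul', hmul⟩ with hu
  have hinv : Ring.inverse (H - ζ • 1) = cfc f H := by
    rw [show H - ζ • (1 : ℋ →L[ℂ] ℋ) = (u : ℋ →L[ℂ] ℋ) from rfl, Ring.inverse_unit]
    rfl
  rw [hinv]
  obtain ⟨z₀, hz₀S, hz₀⟩ := hSc.exists_infDist_eq_dist hS ζ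
  have hgr := IsGreatest.norm_cfc f H hcont hsn
  have hdist : ∀ z ∈ spectrum ℂ H, ‖f z‖ = (dist ζ z)⁻¹ := by
    intro z hz
    rw [hf]
    simp only [norm_inv]
    rw [← dist_eq_norm, dist_comm]
  have hpos : 0 < dist ζ z₀ := dist_pos.mpr (fun h => hζ' (h ▸ hz₀S))
  rw [hz₀]
  apply le_antisymm
  · obtain ⟨z₁, hz₁S, hz₁⟩ := hgr.1
    rw [← hz₁]
    show ‖f z₁‖ ≤ (dist ζ z₀)⁻¹
    rw [hdist z₁ hz₁S]
    exact inv_anti₀ hpos (hz₀ ▸ infDist_le_dist_of_mem hz₁S)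
  · have h2 := hgr.2 ⟨z₀, hz₀S, rfl⟩
    have h3 : (fun x => ‖f x‖) z₀ = (dist ζ z₀)⁻¹ := hdist z₀ hz₀S
    rw [h3] at h2
    exact h2

lemma my_infDist_complex (S : Set ℝ) (hS : S.Nonempty) (hSc : IsCompact S) (x : ℝ) :
    Metric.infDist ((x : ℂ) + Complex.I) ((fun t : ℝ => (t : ℂ)) '' S)
      = Real.sqrt ((Metric.infDist x S) ^ 2 + 1) := by
  obtain ⟨s₀, hs₀S, hs₀⟩ := hSc.exists_infDist_eq_dist hS x
  have hd : ∀ s : ℝ, dist ((x : ℂ) + Complex.I) ((s : ℝ) : ℂ)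
      = Real.sqrt ((dist x s) ^ 2 + 1) := by
    intro s
    rw [Complex.dist_eq_re_im]
    simp [Real.dist_eq, sq_abs]
  apply le_antisymm
  · calc Metric.infDist ((x : ℂ) + Complex.I) ((fun t : ℝ => (t : ℂ)) '' S)
        ≤ dist ((x : ℂ) + Complex.I) ((s₀ : ℝ) : ℂ) :=
          infDist_le_dist_of_mem ⟨s₀, hs₀S, rfl⟩
      _ = Real.sqrt ((Metric.infDist x S) ^ 2 + 1) := by rw [hd, hs₀]
  · obtain ⟨z₂, hz₂, hz₂d⟩ := (hSc.image Complex.continuous_ofReal).exists_infDist_eq_dist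
      (hS.image _) ((x : ℂ) + Complex.I)
    obtain ⟨s₂, hs₂S, rfl⟩ := hz₂
    rw [hz₂d]
    show Real.sqrt _ ≤ dist ((x : ℂ) + Complex.I) ((s₂ : ℝ) : ℂ)
    rw [hd]
    apply Real.sqrt_le_sqrt
    have h1 : Metric.infDist x S ≤ dist x s₂ := infDist_le_dist_of_mem hs₂S
    have h2 : (0:ℝ) ≤ Metric.infDist x S := infDist_nonneg
    nlinarith

end aux


open Filter Topology

/-- If `(H^ℏ)_{ℏ ∈ I}` is a family of bounded self-adjoint operators
on a Hilbert space, indexed by a compact interval `I`, such that for every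
non-real `ζ` the map `ℏ ↦ ‖(H^ℏ - ζ)^{-1}‖` is continuous, then the family of
(real) spectra `ℏ ↦ sp(H^ℏ)` is both outer continuous and inner continuous. -/
theorem resolvent_norm_continuity_implies_spectra_continuity
    {ℋ : Type*} [NormedAddCommGroup ℋ] [InnerProductSpace ℂ ℋ] [CompleteSpace ℋ]
    (a b : ℝ) (hab : a ≤ b)
    (H : Set.Icc a b → ℋ →L[ℂ] ℋ)
    (hsa : ∀ ℏ, IsSelfAdjoint (H ℏ))
    (hres : ∀ ζ : ℂ, ζ.im ≠ 0 →
      Continuous fun ℏ : Set.Icc a b =>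
        ‖Ring.inverse (H ℏ - ζ • (1 : ℋ →L[ℂ] ℋ))‖) :
    -- outer continuity of the family of spectra
    (∀ ℏ₀ : Set.Icc a b, ∀ K : Set ℝ, IsCompact K →
      K ∩ {x : ℝ | (x : ℂ) ∈ spectrum ℂ (H ℏ₀)} = ∅ →
      ∃ V ∈ 𝓝 ℏ₀, ∀ ℏ ∈ V, K ∩ {x : ℝ | (x : ℂ) ∈ spectrum ℂ (H ℏ)} = ∅) ∧
    -- inner continuity of the family of spectra
    (∀ ℏ₀ : Set.Icc a b, ∀ A : Set ℝ, IsOpen A →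
      (A ∩ {x : ℝ | (x : ℂ) ∈ spectrum ℂ (H ℏ₀)}).Nonempty →
      ∃ W ∈ 𝓝 ℏ₀, ∀ ℏ ∈ W, (A ∩ {x : ℝ | (x : ℂ) ∈ spectrum ℂ (H ℏ)}).Nonempty) := by
  rcases subsingleton_or_nontrivial ℋ with hsub | hnt
  · -- trivial Hilbert space: all spectra are empty
    haveI : Subsingleton (ℋ →L[ℂ] ℋ) :=
      ⟨fun f g => ContinuousLinearMap.ext fun x => Subsingleton.elim _ _⟩
    have hspec : ∀ ℏ, {x : ℝ | (x : ℂ) ∈ spectrum ℂ (H ℏ)} = ∅ := by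
      intro ℏ
      ext x
      simp only [Set.mem_setOf_eq, Set.mem_empty_iff_false, iff_false]
      exact spectrum.notMem_iff.mpr (isUnit_of_subsingleton _)
    constructor
    · intro ℏ₀ K _ _
      exact ⟨Set.univ, Filter.univ_mem, fun ℏ _ => by rw [hspec, Set.inter_empty]⟩
    · intro ℏ₀ A _ hA
      rw [hspec, Set.inter_empty] at hA
      exact absurd hA (by simp)
  -- nontrivial case
  set S : Set.Icc a b → Set ℝ := fun ℏ => {x : ℝ | (x : ℂ) ∈ spectrum ℂ (H ℏ)} with hSdef
  have hSclosed : ∀ ℏ, IsClosed (S ℏ) :=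
    fun ℏ => (spectrum.isClosed (H ℏ)).preimage Complex.continuous_ofReal
  have hSne : ∀ ℏ, (S ℏ).Nonempty := by
    intro ℏ
    haveI : Nontrivial (ℋ →L[ℂ] ℋ) := by
      obtain ⟨x, hx⟩ := exists_ne (0 : ℋ)
      exact ⟨1, 0, fun h => hx (by simpa using DFunLike.congr_fun h x)⟩
    obtain ⟨z, hz⟩ := spectrum.nonempty (H ℏ)
    refine ⟨z.re, ?_⟩
    show ((z.re : ℝ) : ℂ) ∈ spectrum ℂ (H ℏ)
    rw [← (hsa ℏ).mem_spectrum_eq_re hz]; exact hz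
  have hScomp : ∀ ℏ, IsCompact (S ℏ) := by
    intro ℏ
    refine IsCompact.of_isClosed_subset
      ((spectrum.isCompact (H ℏ)).image Complex.continuous_re) (hSclosed ℏ) ?_
    intro x hx
    exact ⟨(x : ℂ), hx, by simp⟩
  -- continuity of the distance function
  have key : ∀ x : ℝ, Continuous fun ℏ => Metric.infDist x (S ℏ) := by
    intro x
    have him : ((x : ℂ) + Complex.I).im ≠ 0 := by simp
    have hform : ∀ ℏ, ‖Ring.inverse (H ℏ - ((x : ℂ) + Complex.I) • (1 : ℋ →L[ℂ] ℋ))‖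
        = (Real.sqrt ((Metric.infDist x (S ℏ)) ^ 2 + 1))⁻¹ := by
      intro ℏ
      rw [my_resolvent_norm (H ℏ) (hsa ℏ) him, my_spec_eq (H ℏ) (hsa ℏ),
        my_infDist_complex (S ℏ) (hSne ℏ) (hScomp ℏ)]
    have heq : (fun ℏ => Metric.infDist x (S ℏ))
        = fun ℏ => Real.sqrt
            ((‖Ring.inverse (H ℏ - ((x : ℂ) + Complex.I) • (1 : ℋ →L[ℂ] ℋ))‖)⁻¹ ^ 2 - 1) := by
      funext ℏ
      rw [hform ℏ, inv_inv, Real.sq_sqrt (by positivity), add_sub_cancel_right,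
        Real.sqrt_sq Metric.infDist_nonneg]
    rw [heq]
    have hne0 : ∀ ℏ, ‖Ring.inverse (H ℏ - ((x : ℂ) + Complex.I) • (1 : ℋ →L[ℂ] ℋ))‖ ≠ 0 := by
      intro ℏ
      rw [hform ℏ]
      positivity
    exact Real.continuous_sqrt.comp
      ((((hres _ him).inv₀ hne0).pow 2).sub continuous_const)
  constructor
  · -- outer continuity
    intro ℏ₀ K hK hKS
    rcases K.eq_empty_or_nonempty with rfl | hKne
    · exact ⟨Set.univ, Filter.univ_mem, fun ℏ _ => by rw [Set.empty_inter]⟩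
    have hcont : Continuous fun x : ℝ => Metric.infDist x (S ℏ₀) :=
      (Metric.lipschitz_infDist_pt (S ℏ₀)).continuous
    obtain ⟨x₀, hx₀K, hmin⟩ := hK.exists_isMinOn hKne hcont.continuousOn
    set δ := Metric.infDist x₀ (S ℏ₀) with hδdef
    have hδ : 0 < δ := by
      rcases lt_or_eq_of_le (Metric.infDist_nonneg (x := x₀) (s := S ℏ₀)) with h | h
      · exact h
      · exfalso
        have : x₀ ∈ S ℏ₀ := ((hSclosed ℏ₀).mem_iff_infDist_zero (hSne ℏ₀)).mpr h.symm
        have : x₀ ∈ K ∩ S ℏ₀ := ⟨hx₀K, this⟩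
        rw [hKS] at this
        exact this
    obtain ⟨t, ht⟩ := hK.elim_finite_subcover (fun k : K => Metric.ball (k : ℝ) (δ / 3))
      (fun _ => Metric.isOpen_ball)
      (fun x hx => Set.mem_iUnion.mpr ⟨⟨x, hx⟩, Metric.mem_ball_self (by positivity)⟩)
    refine ⟨⋂ k ∈ t, {ℏ | 2 * δ / 3 < Metric.infDist (k : ℝ) (S ℏ)}, ?_, ?_⟩
    · refine (Filter.biInter_finset_mem t).mpr fun k _ => ?_
      refine (isOpen_lt continuous_const (key (k : ℝ))).mem_nhds ?_
      have : δ ≤ Metric.infDist (k : ℝ) (S ℏ₀) := hmin k.2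
      simp only [Set.mem_setOf_eq]
      linarith
    · intro ℏ hℏ
      rw [Set.eq_empty_iff_forall_notMem]
      rintro x ⟨hxK, hxS⟩
      obtain ⟨k, hkt, hxk⟩ := Set.mem_iUnion₂.mp (ht hxK)
      have h1 : 2 * δ / 3 < Metric.infDist (k : ℝ) (S ℏ) := by
        have := Set.mem_iInter₂.mp hℏ k hkt
        exact this
      have h2 : Metric.infDist (k : ℝ) (S ℏ) ≤ Metric.infDist x (S ℏ) + dist x (k : ℝ) := by
        have := Metric.infDist_le_infDist_add_dist (x := x) (y := (k : ℝ)) (s := S ℏ)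
        -- this : infDist x (S ℏ) ≤ infDist k (S ℏ) + dist k x; need other direction
        calc Metric.infDist (k : ℝ) (S ℏ)
            ≤ Metric.infDist x (S ℏ) + dist (k : ℝ) x :=
              Metric.infDist_le_infDist_add_dist
          _ = Metric.infDist x (S ℏ) + dist x (k : ℝ) := by rw [dist_comm]
      rw [Metric.infDist_zero_of_mem hxS, zero_add] at h2
      have h3 : dist x (k : ℝ) < δ / 3 := Metric.mem_ball.mp hxk
      linarith
  · -- inner continuity
    rintro ℏ₀ A hA ⟨x, hxA, hxS⟩
    obtain ⟨r, hr, hball⟩ := Metric.isOpen_iff.mp hA x hxA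
    refine ⟨{ℏ | Metric.infDist x (S ℏ) < r}, ?_, ?_⟩
    · refine (isOpen_lt (key x) continuous_const).mem_nhds ?_
      simp only [Set.mem_setOf_eq, Metric.infDist_zero_of_mem hxS]
      rwa [Metric.infDist_zero_of_mem (s := S ℏ₀) hxS]
    · intro ℏ hℏ
      obtain ⟨y, hyS, hy⟩ := (Metric.infDist_lt_iff (hSne ℏ)).mp hℏ
      exact ⟨y, hball (by rwa [Metric.mem_ball, dist_comm]), hyS⟩
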